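/- A probability density function f on ℝ is log-concave if and only if the function (x,y) ↦ f(x−y) is TP₂ on ℝ × ℝ, i.e. for all x₁ ≤ x₂ and y₁ ≤ y₂, f(x₁−y₁)·f(x₂−y₂) ≥ f(x₁−y₂)·f(x₂−y₁). -/

import Mathlib

open MeasureTheory Set Filter

/-- `L` is totally positive of order 2 on `I × J`. -/
def IsTP2 (I J : Set ℝ) (L : ℝ → ℝ → ℝ) : Prop :=
  ∀ x₁ ∈ I, ∀ x₂ ∈ I, ∀ y₁ ∈ J, ∀ y₂ ∈ J,
    x₁ ≤ x₂ → y₁ ≤ y₂ → L x₁ y₂ * L x₂ y₁ ≤ L x₁ y₁ * L x₂ y₂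

/-- Abstract analytic heart: if `e` is "Wright concave" on `[x,y]` (inner pairs with equal
sum dominate outer pairs), vanishes at the endpoints, and is interval integrable, then it is
nonnegative on the left half of the interval. -/
lemma key2 (e : ℝ → ℝ) (x y z : ℝ) (hxy : x < y) (hxz : x < z) (hz2 : 2 * z ≤ x + y)
    (hP : ∀ p u q : ℝ, x ≤ p → p ≤ u → u ≤ q → q ≤ y → e p + e q ≤ e u + e (p + q - u))
    (hex : e x = 0) (hey : e y = 0)
    (hint : IntervalIntegrable e volume x y) : 0 ≤ e z := by
  have hzy : z < y := by linarith
  -- midpoint inequality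
  have hmid : ∀ u v, x ≤ u → u ≤ v → v ≤ y → e u + e v ≤ 2 * e ((u + v) / 2) := by
    intro u v h1 h2 h3
    have h := hP u ((u + v) / 2) v h1 (by linarith) (by linarith) h3
    have harg : u + v - (u + v) / 2 = (u + v) / 2 := by ring
    rw [harg] at h
    linarith
  -- dyadic nonnegativity
  have hdy : ∀ n : ℕ, ∀ k : ℕ, k ≤ 2 ^ n → 0 ≤ e (x + ((k : ℝ) / 2 ^ n) * (y - x)) := by
    intro n
    induction n with
    | zero =>
      intro k hk
      interval_cases k
      · have h : x + ((0 : ℕ) : ℝ) / 2 ^ 0 * (y - x) = x := by norm_num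
        rw [h, hex]
      · have h : x + ((1 : ℕ) : ℝ) / 2 ^ 0 * (y - x) = y := by norm_num
        rw [h, hey]
    | succ n ih =>
      intro k hk
      have h2 : (2 : ℕ) ^ (n + 1) = 2 * 2 ^ n := by rw [pow_succ]; ring
      have h2n : (0 : ℝ) < 2 ^ n := by positivity
      rcases Nat.even_or_odd k with ⟨j, hj⟩ | ⟨j, hj⟩
      · subst hj
        have hj2 : j ≤ 2 ^ n := by omega
        have harg : x + (((j + j : ℕ) : ℝ) / 2 ^ (n + 1)) * (y - x)
            = x + ((j : ℝ) / 2 ^ n) * (y - x) := by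
          push_cast
          rw [pow_succ]
          field_simp
          ring
        rw [harg]
        exact ih j hj2
      · subst hj
        have hj1 : j + 1 ≤ 2 ^ n := by omega
        have hju : (j : ℝ) / 2 ^ n ≤ ((j : ℝ) + 1) / 2 ^ n := by gcongr; linarith
        have hj1' : ((j : ℝ) + 1) / 2 ^ n ≤ 1 := by
          rw [div_le_one h2n]
          exact_mod_cast hj1
        set u := x + ((j : ℝ) / 2 ^ n) * (y - x) with hu
        set v := x + (((j : ℝ) + 1) / 2 ^ n) * (y - x) with hv
        have hxu : x ≤ u := by
          have h : 0 ≤ ((j : ℝ) / 2 ^ n) * (y - x) := by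
            apply mul_nonneg (by positivity) (by linarith)
          simp only [hu]; linarith
        have huv : u ≤ v := by
          have h := mul_le_mul_of_nonneg_right hju (by linarith : (0:ℝ) ≤ y - x)
          simp only [hu, hv]; linarith
        have hvy : v ≤ y := by
          have h := mul_le_mul_of_nonneg_right hj1' (by linarith : (0:ℝ) ≤ y - x)
          simp only [hv]; linarith
        have hm := hmid u v hxu huv hvy
        have hiu : 0 ≤ e u := ih j (by omega)
        have hiv : 0 ≤ e v := by
          have h := ih (j + 1) hj1
          have hc : x + (((j + 1 : ℕ) : ℝ) / 2 ^ n) * (y - x) = v := by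
            simp only [hv]; push_cast; ring
          rwa [hc] at h
        have harg : (u + v) / 2 = x + (((2 * j + 1 : ℕ) : ℝ) / 2 ^ (n + 1)) * (y - x) := by
          simp only [hu, hv]
          push_cast
          rw [pow_succ]
          field_simp
          ring
        rw [harg] at hm
        linarith
  -- subinterval integrability
  have hsub : ∀ p q : ℝ, x ≤ p → p ≤ q → q ≤ y → IntervalIntegrable e volume p q := by
    intro p q hp hpq hq
    refine hint.mono_set ?_
    rw [Set.uIcc_of_le hxy.le, Set.uIcc_of_le hpq]
    exact Set.Icc_subset_Icc hp hq
  -- primitive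
  set F : ℝ → ℝ := fun c => ∫ u in x..c, e u with hF
  -- reflection identity
  have hrefl : ∀ c : ℝ, (∫ u in x..c, e (x + c - u)) = F c := by
    intro c
    have h := intervalIntegral.integral_comp_sub_left (a := x) (b := c) e (x + c)
    rw [h, add_sub_cancel_right, add_sub_cancel_left]
  -- reflected integrability
  have hsubr : ∀ c : ℝ, x ≤ c → c ≤ y →
      IntervalIntegrable (fun u => e (x + c - u)) volume x c := by
    intro c h1 h2
    have h := (hsub x c le_rfl h1 h2).comp_sub_left (x + c)
    have e1 : x + c - x = c := by ring
    have e2 : x + c - c = x := by ring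
    rw [e1, e2] at h
    exact h.symm
  -- lower bound for F at points where e is controlled
  have hFlow : ∀ c : ℝ, x ≤ c → c ≤ y → (c - x) * e c ≤ 2 * F c := by
    intro c h1 h2
    have hint1 : IntervalIntegrable e volume x c := hsub x c le_rfl h1 h2
    have hint2 := hsubr c h1 h2
    have hmono : (∫ u in x..c, e c) ≤ ∫ u in x..c, (e u + e (x + c - u)) := by
      apply intervalIntegral.integral_mono_on h1 intervalIntegrable_const (hint1.add hint2)
      intro u hu
      have h := hP x u c le_rfl hu.1 hu.2 h2
      rw [hex] at h
      linarith
    rw [intervalIntegral.integral_const, intervalIntegral.integral_add hint1 hint2, hrefl] at hmono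
    simp only [smul_eq_mul] at hmono
    linarith
  -- F is nonnegative on [x,y]
  have hFcont : ContinuousOn F (Icc x y) := by
    have h := intervalIntegral.continuousOn_primitive_interval' hint left_mem_uIcc
    rwa [Set.uIcc_of_le hxy.le] at h
  have hF0 : ∀ c : ℝ, x ≤ c → c ≤ y → 0 ≤ F c := by
    intro c h1 h2
    set r : ℝ := (c - x) / (y - x) with hr
    have hyx : (0 : ℝ) < y - x := by linarith
    have hr0 : 0 ≤ r := div_nonneg (by linarith) (by linarith)
    have hr1 : r ≤ 1 := by rw [hr, div_le_one hyx]; linarith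
    set s : ℕ → ℝ := fun n => x + ((⌊r * 2 ^ n⌋₊ : ℝ) / 2 ^ n) * (y - x) with hs
    have hsk : ∀ n : ℕ, (⌊r * 2 ^ n⌋₊ : ℕ) ≤ 2 ^ n := by
      intro n
      have : r * 2 ^ n ≤ ((2 ^ n : ℕ) : ℝ) := by
        push_cast
        nlinarith [pow_pos (show (0:ℝ) < 2 by norm_num) n]
      calc ⌊r * 2 ^ n⌋₊ ≤ ⌊((2 ^ n : ℕ) : ℝ)⌋₊ := Nat.floor_mono this
        _ = 2 ^ n := Nat.floor_natCast _
    have hsmem : ∀ n : ℕ, x ≤ s n ∧ s n ≤ y := by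
      intro n
      have h2n : (0 : ℝ) < 2 ^ n := by positivity
      constructor
      · have : 0 ≤ ((⌊r * 2 ^ n⌋₊ : ℝ) / 2 ^ n) * (y - x) := by positivity
        simp only [hs]; linarith
      · have hle : ((⌊r * 2 ^ n⌋₊ : ℝ) / 2 ^ n) ≤ 1 := by
          rw [div_le_one h2n]
          exact_mod_cast hsk n
        have := mul_le_mul_of_nonneg_right hle (le_of_lt hyx)
        simp only [hs]; linarith
    have hsF : ∀ n : ℕ, 0 ≤ F (s n) := by
      intro n
      have he := hdy n ⌊r * 2 ^ n⌋₊ (hsk n)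
      have hlow := hFlow (s n) (hsmem n).1 (hsmem n).2
      have hx0 : 0 ≤ s n - x := by linarith [(hsmem n).1]
      nlinarith [mul_nonneg hx0 he]
    -- s n → c
    have hclose : ∀ n : ℕ, c - (y - x) / 2 ^ n ≤ s n ∧ s n ≤ c := by
      intro n
      have h2n : (0 : ℝ) < 2 ^ n := by positivity
      have hfl : (⌊r * 2 ^ n⌋₊ : ℝ) ≤ r * 2 ^ n := Nat.floor_le (by positivity)
      have hfl2 : r * 2 ^ n < (⌊r * 2 ^ n⌋₊ : ℝ) + 1 := Nat.lt_floor_add_one _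
      constructor
      · have hq : r - 1 / 2 ^ n ≤ (⌊r * 2 ^ n⌋₊ : ℝ) / 2 ^ n := by
          have hone : (1 / 2 ^ n : ℝ) * 2 ^ n = 1 := by field_simp
          rw [le_div_iff₀ h2n]
          nlinarith [hfl2, hone]
        have := mul_le_mul_of_nonneg_right hq (by linarith : (0:ℝ) ≤ y - x)
        have hc' : x + (r - 1 / 2 ^ n) * (y - x) = c - (y - x) / 2 ^ n := by
          simp only [hr]; field_simp; ring
        simp only [hs]; nlinarith
      · have hq : (⌊r * 2 ^ n⌋₊ : ℝ) / 2 ^ n ≤ r := by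
          rw [div_le_iff₀ h2n]; linarith
        have := mul_le_mul_of_nonneg_right hq (by linarith : (0:ℝ) ≤ y - x)
        have hc' : x + r * (y - x) = c := by simp only [hr]; field_simp; ring
        simp only [hs]; nlinarith
    have htend : Tendsto s atTop (nhds c) := by
      have h1 : Tendsto (fun n : ℕ => c - (y - x) / 2 ^ n) atTop (nhds c) := by
        have h2 : Tendsto (fun n : ℕ => (y - x) / 2 ^ n) atTop (nhds 0) := by
          simp_rw [div_eq_mul_inv, ← inv_pow]
          have := tendsto_pow_atTop_nhds_zero_of_lt_one
            (by norm_num : (0:ℝ) ≤ 2⁻¹) (by norm_num : (2:ℝ)⁻¹ < 1)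
          simpa using this.const_mul (y - x)
        have := (tendsto_const_nhds (x := c) (f := atTop (α := ℕ))).sub h2
        simpa using this
      exact tendsto_of_tendsto_of_tendsto_of_le_of_le h1 tendsto_const_nhds
        (fun n => (hclose n).1) (fun n => (hclose n).2)
    have htendF : Tendsto (fun n => F (s n)) atTop (nhds (F c)) := by
      apply (hFcont c ⟨h1, h2⟩).tendsto.comp
      apply tendsto_nhdsWithin_of_tendsto_nhds_of_eventually_within _ htend
      exact Eventually.of_forall (fun n => ⟨(hsmem n).1, (hsmem n).2⟩)
    exact ge_of_tendsto' htendF hsF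
  -- upper bound: 2 F(2z-x) ≤ 4 (z-x) e z
  set c : ℝ := 2 * z - x with hc
  have hxc : x ≤ c := by simp only [hc]; linarith
  have hcy : c ≤ y := by simp only [hc]; linarith
  have hup : 2 * F c ≤ (c - x) * (2 * e z) := by
    have hint1 : IntervalIntegrable e volume x c := hsub x c le_rfl hxc hcy
    have hint2 := hsubr c hxc hcy
    have hmono : (∫ u in x..c, (e u + e (x + c - u))) ≤ ∫ u in x..c, (2 * e z) := by
      apply intervalIntegral.integral_mono_on hxc (hint1.add hint2) intervalIntegrable_const
      intro u hu
      have harg : x + c - u = 2 * z - u := by simp only [hc]; ring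
      rw [harg]
      rcases le_total u z with h | h
      · have hp := hP u z (2 * z - u) hu.1 h (by linarith)
          (by simp only [hc] at hu hcy; linarith [hu.1, hu.2, hcy])
        have h1 : u + (2 * z - u) - z = z := by ring
        rw [h1] at hp
        linarith
      · have hu2 : u ≤ c := hu.2
        have hp := hP (2 * z - u) z u (by simp only [hc] at hu2 hcy; linarith) (by linarith) h
          (by simp only [hc] at hu2 hcy; linarith)
        have h1 : 2 * z - u + u - z = z := by ring
        rw [h1] at hp
        linarith
    rw [intervalIntegral.integral_const, intervalIntegral.integral_add hint1 hint2, hrefl] at hmono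
    simp only [smul_eq_mul] at hmono
    linarith
  have hF0c := hF0 c hxc hcy
  have hzx : (0 : ℝ) < c - x := by simp only [hc]; linarith
  nlinarith

/-- From the Wright-type inequality for `f`, plus measurability and integrability,
deduce the log-concavity inequality in multiplied-out logarithmic form, for `z` in the
left half of `[x,y]`. -/
lemma key (f : ℝ → ℝ) (hf0 : ∀ x, 0 ≤ f x) (hmeas : Measurable f)
    (hint : Integrable f (volume : Measure ℝ))
    (hW : ∀ a b d : ℝ, a ≤ b → b ≤ d → f a * f d ≤ f b * f (a + d - b))
    (x y z : ℝ) (hxy : x < y) (hxz : x < z) (hz2 : 2 * z ≤ x + y)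
    (hfx : 0 < f x) (hfy : 0 < f y) :
    (y - z) * Real.log (f x) + (z - x) * Real.log (f y) ≤ (y - x) * Real.log (f z) := by
  have hyx : (0 : ℝ) < y - x := by linarith
  have hpos : ∀ u, x ≤ u → u ≤ y → 0 < f u := by
    intro u h1 h2
    have h3 := hW x u y h1 h2
    have h4 : 0 < f u * f (x + y - u) := lt_of_lt_of_le (mul_pos hfx hfy) h3
    rcases mul_pos_iff.mp h4 with ⟨h, _⟩ | ⟨h, _⟩
    · exact h
    · linarith [hf0 u]
  set A := Real.log (f x) with hA
  set B := Real.log (f y) with hB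
  set e : ℝ → ℝ := fun u => Real.log (f u) - (A + (u - x) * ((B - A) / (y - x))) with he
  have hP : ∀ p u q : ℝ, x ≤ p → p ≤ u → u ≤ q → q ≤ y → e p + e q ≤ e u + e (p + q - u) := by
    intro p u q h1 h2 h3 h4
    have hWp := hW p u q h2 h3
    have hp := hpos p h1 (by linarith)
    have hq := hpos q (by linarith) h4
    have hu := hpos u (by linarith) (by linarith)
    have hcc := hpos (p + q - u) (by linarith) (by linarith)
    have hl : Real.log (f p * f q) ≤ Real.log (f u * f (p + q - u)) :=
      Real.log_le_log (mul_pos hp hq) hWp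
    rw [Real.log_mul hp.ne' hq.ne', Real.log_mul hu.ne' hcc.ne'] at hl
    have haff : (p - x) * ((B - A) / (y - x)) + (q - x) * ((B - A) / (y - x))
        = (u - x) * ((B - A) / (y - x)) + (p + q - u - x) * ((B - A) / (y - x)) := by ring
    simp only [he]
    linarith
  have hex : e x = 0 := by simp [he, hA]
  have hey : e y = 0 := by
    simp only [he]
    field_simp
    rw [← hB]; ring
  -- integrability of e on [x,y]
  have heint : IntervalIntegrable e volume x y := by
    have hC : (0:ℝ) ≤ |A| + |B| := by positivity
    set g : ℝ → ℝ := fun u => |f u - 1| + |f (x + y - u) - 1| + (|A| + |B|) with hg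
    have hgint : IntervalIntegrable g volume x y := by
      have h1 : IntervalIntegrable f volume x y := hint.intervalIntegrable
      have h2 : IntervalIntegrable (fun u => f (x + y - u)) volume x y := by
        have h := (hint.intervalIntegrable (a := y) (b := x)).comp_sub_left (x + y)
        have e1 : x + y - y = x := by ring
        have e2 : x + y - x = y := by ring
        rw [e1, e2] at h
        exact h
      exact (((h1.sub intervalIntegrable_const).abs).add
        ((h2.sub intervalIntegrable_const).abs)).add intervalIntegrable_const
    have hlogint : IntervalIntegrable (fun u => Real.log (f u)) volume x y := by
      apply hgint.mono_fun (hmeas.log.aestronglyMeasurable)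
      filter_upwards [ae_restrict_mem measurableSet_uIoc] with u hu
      rw [Set.uIoc_of_le hxy.le] at hu
      have hu1 : x ≤ u := le_of_lt hu.1
      have hu2 : u ≤ y := hu.2
      have hfu := hpos u hu1 hu2
      have hfru := hpos (x + y - u) (by linarith) (by linarith)
      have hub : Real.log (f u) ≤ f u - 1 := Real.log_le_sub_one_of_pos hfu
      have hlb : A + B ≤ Real.log (f u) + Real.log (f (x + y - u)) := by
        have h3 := hW x u y hu1 hu2
        have hl := Real.log_le_log (mul_pos hfx hfy) h3
        rw [Real.log_mul hfx.ne' hfy.ne', Real.log_mul hfu.ne' hfru.ne'] at hl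
        exact hl
      have hub2 : Real.log (f (x + y - u)) ≤ f (x + y - u) - 1 :=
        Real.log_le_sub_one_of_pos hfru
      have hgnn : 0 ≤ g u := by
        simp only [hg]
        positivity
      rw [Real.norm_eq_abs, Real.norm_eq_abs, abs_of_nonneg hgnn, abs_le]
      constructor
      · simp only [hg]
        have h1 : -(A + B) ≤ |A| + |B| := by
          have := abs_le.mp (le_refl |A|)
          have hA' := neg_abs_le A
          have hB' := neg_abs_le B
          linarith
        have h2 : f (x + y - u) - 1 ≤ |f (x + y - u) - 1| := le_abs_self _
        have h3 : 0 ≤ |f u - 1| := abs_nonneg _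
        linarith
      · simp only [hg]
        have h2 : f u - 1 ≤ |f u - 1| := le_abs_self _
        have h3 : 0 ≤ |f (x + y - u) - 1| := abs_nonneg _
        linarith
    have haffint : IntervalIntegrable (fun u => A + (u - x) * ((B - A) / (y - x)))
        volume x y := by
      apply Continuous.intervalIntegrable
      continuity
    exact hlogint.sub haffint
  have hez := key2 e x y z hxy hxz hz2 hP hex hey heint
  simp only [he] at hez
  have hmul := mul_le_mul_of_nonneg_left hez (le_of_lt hyx)
  have hfs : (y - x) * ((z - x) * ((B - A) / (y - x))) = (z - x) * (B - A) := by
    field_simp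
  nlinarith [hez, hyx]

theorem stmt3 (f : ℝ → ℝ)
    (hf0 : ∀ x, 0 ≤ f x) (hfmeas : Measurable f)
    (hf1 : ∫ x, f x = 1) :
    (∀ x y t : ℝ, 0 ≤ t → t ≤ 1 →
        f x ^ t * f y ^ (1 - t) ≤ f (t * x + (1 - t) * y)) ↔
      IsTP2 univ univ (fun x y => f (x - y)) := by
  constructor
  · -- log-concave ⇒ TP2
    intro hlc x₁ _ x₂ _ y₁ _ y₂ _ hx hy
    simp only
    set a := x₁ - y₂ with ha
    set b := x₁ - y₁ with hb
    set c := x₂ - y₂ with hcc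
    set d := x₂ - y₁ with hd
    have hab : a ≤ b := by simp only [ha, hb]; linarith
    have hbd : b ≤ d := by simp only [hb, hd]; linarith
    have hac : a ≤ c := by simp only [ha, hcc]; linarith
    have hcd : c ≤ d := by simp only [hcc, hd]; linarith
    have hsum : a + d = b + c := by simp only [ha, hb, hcc, hd]; ring
    rcases eq_or_lt_of_le (le_trans hab hbd) with heq | hlt
    · have h1 : b = a := le_antisymm (heq ▸ hbd) hab
      have h2 : c = a := le_antisymm (heq ▸ hcd) hac
      rw [h1, h2, ← heq]
    · set t := (d - b) / (d - a) with ht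
      have hda : (0 : ℝ) < d - a := by linarith
      have ht0 : 0 ≤ t := div_nonneg (by linarith) (by linarith)
      have ht1 : t ≤ 1 := by rw [ht, div_le_one hda]; linarith
      have e1 := hlc a d t ht0 ht1
      have e2 := hlc a d (1 - t) (by linarith) (by linarith)
      have htda : t * (d - a) = d - b := by
        rw [ht]; field_simp
      have hb' : t * a + (1 - t) * d = b := by linear_combination -htda
      have hc' : (1 - t) * a + (1 - (1 - t)) * d = c := by linear_combination htda + hsum
      rw [hb'] at e1
      rw [hc', show (1:ℝ) - (1 - t) = t from by ring] at e2
      calc f a * f d = (f a ^ t * f d ^ (1 - t)) * (f a ^ (1 - t) * f d ^ t) := by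
            rw [show (f a ^ t * f d ^ (1 - t)) * (f a ^ (1 - t) * f d ^ t)
                = (f a ^ t * f a ^ (1 - t)) * (f d ^ (1 - t) * f d ^ t) from by ring,
              ← Real.rpow_add_of_nonneg (hf0 a) ht0 (by linarith),
              ← Real.rpow_add_of_nonneg (hf0 d) (by linarith) ht0,
              show t + (1 - t) = 1 from by ring, show 1 - t + t = 1 from by ring,
              Real.rpow_one, Real.rpow_one]
        _ ≤ f b * f c := by
            exact mul_le_mul e1 e2 (mul_nonneg (Real.rpow_nonneg (hf0 a) _) (Real.rpow_nonneg (hf0 d) _)) (hf0 b)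
  · -- TP2 ⇒ log-concave
    intro htp2
    have hW : ∀ a b d : ℝ, a ≤ b → b ≤ d → f a * f d ≤ f b * f (a + d - b) := by
      intro a b d hab hbd
      have h := htp2 b (mem_univ _) d (mem_univ _) 0 (mem_univ _) (b - a) (mem_univ _)
        hbd (by linarith)
      simp only at h
      rw [show b - (b - a) = a from by ring, show d - (b - a) = a + d - b from by ring,
        sub_zero, sub_zero] at h
      exact h
    have hint : Integrable f (volume : Measure ℝ) := by
      by_contra hni
      rw [MeasureTheory.integral_undef hni] at hf1
      norm_num at hf1
    -- positivity on segments
    have hposseg : ∀ x y u : ℝ, x ≤ u → u ≤ y → 0 < f x → 0 < f y → 0 < f u := by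
      intro x y u h1 h2 hfx hfy
      have h3 := hW x u y h1 h2
      have h4 : 0 < f u * f (x + y - u) := lt_of_lt_of_le (mul_pos hfx hfy) h3
      rcases mul_pos_iff.mp h4 with ⟨h, _⟩ | ⟨h, _⟩
      · exact h
      · linarith [hf0 u]
    -- main inequality for x < y with positive values
    have main : ∀ x y t : ℝ, 0 < t → t < 1 → x < y → 0 < f x → 0 < f y →
        f x ^ t * f y ^ (1 - t) ≤ f (t * x + (1 - t) * y) := by
      intro x y t ht0 ht1 hxy hfx hfy
      set z := t * x + (1 - t) * y with hz
      have hxz : x < z := by simp only [hz]; nlinarith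
      have hzy : z < y := by simp only [hz]; nlinarith
      have hyx : (0 : ℝ) < y - x := by linarith
      have hkey : (y - z) * Real.log (f x) + (z - x) * Real.log (f y)
          ≤ (y - x) * Real.log (f z) := by
        rcases le_total (2 * z) (x + y) with hle | hge
        · exact key f hf0 hfmeas hint hW x y z hxy hxz hle hfx hfy
        · -- reflect
          set g : ℝ → ℝ := fun u => f (x + y - u) with hg
          have hg0 : ∀ u, 0 ≤ g u := fun u => hf0 _
          have hgmeas : Measurable g := hfmeas.comp (measurable_const.sub measurable_id)
          have hgint : Integrable g (volume : Measure ℝ) := hint.comp_sub_left (x + y)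
          have hW' : ∀ a b d : ℝ, a ≤ b → b ≤ d → g a * g d ≤ g b * g (a + d - b) := by
            intro a b d hab hbd
            have h := hW (x + y - d) (x + y - (a + d - b)) (x + y - a)
              (by linarith) (by linarith)
            rw [show x + y - d + (x + y - a) - (x + y - (a + d - b)) = x + y - b from by ring]
              at h
            simp only [hg]
            calc f (x + y - a) * f (x + y - d) = f (x + y - d) * f (x + y - a) := mul_comm _ _
              _ ≤ f (x + y - (a + d - b)) * f (x + y - b) := h
              _ = f (x + y - b) * f (x + y - (a + d - b)) := mul_comm _ _
          have hgx : g x = f y := by simp only [hg]; rw [show x + y - x = y from by ring]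
          have hgy : g y = f x := by simp only [hg]; rw [show x + y - y = x from by ring]
          have h := key g hg0 hgmeas hgint hW' x y (x + y - z) hxy (by linarith) (by linarith)
            (by rw [hgx]; exact hfy) (by rw [hgy]; exact hfx)
          rw [hgx, hgy] at h
          simp only [hg] at h
          rw [show x + y - (x + y - z) = z from by ring] at h
          have h1 : y - (x + y - z) = z - x := by ring
          have h2 : x + y - z - x = y - z := by ring
          rw [h1, h2] at h
          linarith
      have hfz : 0 < f z := hposseg x y z hxz.le hzy.le hfx hfy
      have hlog : t * Real.log (f x) + (1 - t) * Real.log (f y) ≤ Real.log (f z) := by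
        have h1 : y - z = t * (y - x) := by simp only [hz]; ring
        have h2 : z - x = (1 - t) * (y - x) := by simp only [hz]; ring
        rw [h1, h2] at hkey
        have h3 : (y - x) * (t * Real.log (f x) + (1 - t) * Real.log (f y))
            ≤ (y - x) * Real.log (f z) := by nlinarith [hkey]
        exact le_of_mul_le_mul_left h3 hyx
      calc f x ^ t * f y ^ (1 - t)
          = Real.exp (t * Real.log (f x) + (1 - t) * Real.log (f y)) := by
            rw [Real.rpow_def_of_pos hfx, Real.rpow_def_of_pos hfy, ← Real.exp_add]
            ring_nf
        _ ≤ Real.exp (Real.log (f z)) := Real.exp_le_exp.mpr hlog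
        _ = f z := Real.exp_log hfz
    -- glue: handle zero values
    have main2 : ∀ x y t : ℝ, 0 < t → t < 1 → x < y →
        f x ^ t * f y ^ (1 - t) ≤ f (t * x + (1 - t) * y) := by
      intro x y t h0 h1 hxy
      by_cases hfx : f x = 0
      · rw [hfx, Real.zero_rpow h0.ne', zero_mul]
        exact hf0 _
      by_cases hfy : f y = 0
      · rw [hfy, Real.zero_rpow (show (1:ℝ) - t ≠ 0 from (by linarith : (0:ℝ) < 1 - t).ne'), mul_zero]
        exact hf0 _
      exact main x y t h0 h1 hxy ((hf0 x).lt_of_ne (Ne.symm hfx))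
        ((hf0 y).lt_of_ne (Ne.symm hfy))
    intro x y t ht0 ht1
    rcases eq_or_lt_of_le ht0 with h0 | h0
    · rw [← h0]
      rw [Real.rpow_zero, one_mul, show (1:ℝ) - 0 = 1 from by ring, Real.rpow_one,
        zero_mul, zero_add, one_mul]
    rcases eq_or_lt_of_le ht1 with h1 | h1
    · rw [h1]
      rw [show (1:ℝ) - 1 = 0 from by ring, Real.rpow_zero, mul_one, Real.rpow_one,
        one_mul, zero_mul, add_zero]
    rcases lt_trichotomy x y with hxy | hxy | hxy
    · exact main2 x y t h0 h1 hxy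
    · rw [hxy, show t * y + (1 - t) * y = y from by ring,
        ← Real.rpow_add_of_nonneg (hf0 y) (le_of_lt h0) (by linarith),
        show t + (1 - t) = 1 from by ring, Real.rpow_one]
    · have h := main2 y x (1 - t) (by linarith) (by linarith) hxy
      rw [show (1:ℝ) - (1 - t) = t from by ring] at h
      calc f x ^ t * f y ^ (1 - t) = f y ^ (1 - t) * f x ^ t := mul_comm _ _
        _ ≤ f ((1 - t) * y + t * x) := h
        _ = f (t * x + (1 - t) * y) := by rw [show (1 - t) * y + t * x = t * x + (1 - t) * y from by ring]
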